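/- Injectivity of the comparison from globular to cubical homotopy classes: let X be a topological space with a filtration X₀ ⊆ X₁ ⊆ ⋯ ⊆ X, let n ≥ 1, and let α, β : Dⁿ → X be continuous maps that are filtered for the globe filtration (α and β map the k-skeleton of the n-globe into X_k for all k, and Dⁿ into X_m for m ≥ n). Suppose there is a continuous map H : Iⁿ × [0,1] → X such that H(x,0) = α(φₙ(x)) and H(x,1) = β(φₙ(x)) for all x ∈ Iⁿ, for each t ∈ [0,1] the map H(·,t) is filtered for the cube filtration (it maps the k-skeleton of Iⁿ into X_k for all k < n, and Iⁿ into X_m for m ≥ n), and H(v,t) = H(v,0) for every vertex v of Iⁿ and every t ∈ [0,1]. Then there is a continuous map L : Dⁿ × [0,1] → X such that L(z,0) = α(z) and L(z,1) = β(z) for all z ∈ Dⁿ, for each t the map L(·,t) is filtered for the globe filtration, and L(w,t) = L(w,0) for every t ∈ [0,1] and each of the two points w = (0,…,0,1) and w = (0,…,0,−1). -/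

import Mathlib

/-- The comparison map φₙ : Iⁿ → Gⁿ, defined recursively by φ₁(x₁) = x₁ and
    φₙ(t, y) = (t·√(1 − ‖φₙ₋₁(y)‖²), φₙ₋₁(y)). -/
noncomputable def phi : (n : ℕ) → EuclideanSpace ℝ (Fin n) → EuclideanSpace ℝ (Fin n)
  | 0, x => x
  | n + 1, x =>
    WithLp.toLp 2 (Fin.cons (x 0 * Real.sqrt (1 - ‖phi n (WithLp.toLp 2 fun i : Fin n => x i.succ)‖ ^ 2))
        (phi n (WithLp.toLp 2 fun i : Fin n => x i.succ)) : Fin (n + 1) → ℝ)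

/-- The n-cube Iⁿ = [−1,1]ⁿ, inside Euclidean n-space. -/
def cube (n : ℕ) : Set (EuclideanSpace ℝ (Fin n)) := {x | ∀ i, |x i| ≤ 1}

/-- The n-disk Dⁿ = {x : ‖x‖ ≤ 1}, the underlying space of the n-globe Gⁿ. -/
def disk (n : ℕ) : Set (EuclideanSpace ℝ (Fin n)) := {x | ‖x‖ ≤ 1}

/-- The `k`-skeleton of the `n`-globe: points of norm `1` whose first `n − k − 1`
coordinates vanish. -/
def globeSkel (n k : ℕ) : Set (EuclideanSpace ℝ (Fin n)) :=
  {z | ‖z‖ = 1 ∧ ∀ j : Fin n, (j : ℕ) < n - k - 1 → z j = 0}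

/-- The `k`-skeleton of the `n`-cube: points of `Iⁿ` with at least `n − k` coordinates
of absolute value `1`. -/
def cubeSkel (n k : ℕ) : Set (EuclideanSpace ℝ (Fin n)) :=
  {x | (∀ i, |x i| ≤ 1) ∧ n - k ≤ (Finset.univ.filter fun i : Fin n => |x i| = 1).card}

/-- The two vertices `(0, …, 0, ±1)` of the `n`-globe. -/
noncomputable def pole (n : ℕ) (a : ℝ) : EuclideanSpace ℝ (Fin n) :=
  WithLp.toLp 2 (fun j => if (j : ℕ) = n - 1 then a else 0 : Fin n → ℝ)

/-- suffix sum of squares from index m -/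
def Tl (n : ℕ) (z : EuclideanSpace ℝ (Fin n)) (m : ℕ) : ℝ :=
  ∑ i ∈ Finset.univ.filter (fun i : Fin n => m ≤ (i : ℕ)), z i ^ 2

/-- suffix product Γ_m = ∏_{i ≥ m} (1 - x_i²) -/
def Gp (n : ℕ) (x : EuclideanSpace ℝ (Fin n)) (m : ℕ) : ℝ :=
  ∏ i ∈ Finset.univ.filter (fun i : Fin n => m ≤ (i : ℕ)), (1 - x i ^ 2)

lemma filter_ge_top {n m : ℕ} (h : n ≤ m) :
    (Finset.univ.filter (fun i : Fin n => m ≤ (i : ℕ))) = ∅ := by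
  ext i; simp only [Finset.mem_filter, Finset.mem_univ, true_and, Finset.notMem_empty,
    iff_false]
  have := i.isLt; omega

lemma filter_ge_zero (n : ℕ) :
    (Finset.univ.filter (fun i : Fin n => 0 ≤ (i : ℕ))) = Finset.univ := by
  ext i; simp

lemma filter_ge_split {n m : ℕ} (hm : m < n) :
    (Finset.univ.filter (fun i : Fin n => m ≤ (i : ℕ))) =
      insert ⟨m, hm⟩ (Finset.univ.filter (fun i : Fin n => m + 1 ≤ (i : ℕ))) := by
  ext i
  simp only [Finset.mem_filter, Finset.mem_univ, true_and, Finset.mem_insert]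
  constructor
  · intro h
    rcases eq_or_lt_of_le h with h' | h'
    · left; exact Fin.ext h'.symm
    · right; omega
  · rintro (rfl | h)
    · simp
    · omega

lemma Gp_top {n : ℕ} (x : EuclideanSpace ℝ (Fin n)) {m : ℕ} (h : n ≤ m) : Gp n x m = 1 := by
  rw [Gp, filter_ge_top h, Finset.prod_empty]

lemma Tl_top {n : ℕ} (z : EuclideanSpace ℝ (Fin n)) {m : ℕ} (h : n ≤ m) : Tl n z m = 0 := by
  rw [Tl, filter_ge_top h, Finset.sum_empty]

lemma Gp_factor {n : ℕ} (x : EuclideanSpace ℝ (Fin n)) {m : ℕ} (hm : m < n) :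
    Gp n x m = (1 - x ⟨m, hm⟩ ^ 2) * Gp n x (m + 1) := by
  rw [Gp, Gp, filter_ge_split hm, Finset.prod_insert]
  simp

lemma Tl_factor {n : ℕ} (z : EuclideanSpace ℝ (Fin n)) {m : ℕ} (hm : m < n) :
    Tl n z m = z ⟨m, hm⟩ ^ 2 + Tl n z (m + 1) := by
  rw [Tl, Tl, filter_ge_split hm, Finset.sum_insert]
  simp

lemma Tl_nonneg {n : ℕ} (z : EuclideanSpace ℝ (Fin n)) (m : ℕ) : 0 ≤ Tl n z m :=
  Finset.sum_nonneg fun _ _ => sq_nonneg _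

lemma Tl_anti {n : ℕ} (z : EuclideanSpace ℝ (Fin n)) {m m' : ℕ} (h : m ≤ m') :
    Tl n z m' ≤ Tl n z m := by
  apply Finset.sum_le_sum_of_subset_of_nonneg
  · intro i hi
    simp only [Finset.mem_filter, Finset.mem_univ, true_and] at hi ⊢
    omega
  · intro _ _ _; exact sq_nonneg _

lemma Tl_zero_eq {n : ℕ} (z : EuclideanSpace ℝ (Fin n)) : Tl n z 0 = ‖z‖ ^ 2 := by
  rw [EuclideanSpace.norm_eq, Real.sq_sqrt (Finset.sum_nonneg fun _ _ => sq_nonneg _)]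
  rw [Tl, filter_ge_zero]
  simp [Real.norm_eq_abs, sq_abs]

lemma Gp_nonneg {n : ℕ} {x : EuclideanSpace ℝ (Fin n)} (hx : x ∈ cube n) (m : ℕ) :
    0 ≤ Gp n x m := by
  apply Finset.prod_nonneg
  intro i _
  have h1 := hx i
  have h2 : x i ^ 2 ≤ 1 := by rw [← sq_abs]; nlinarith [abs_nonneg (x i)]
  linarith

lemma Gp_le_one {n : ℕ} {x : EuclideanSpace ℝ (Fin n)} (hx : x ∈ cube n) (m : ℕ) :
    Gp n x m ≤ 1 := by
  apply Finset.prod_le_one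
  · intro i _
    have h1 := hx i
    have h2 : x i ^ 2 ≤ 1 := by rw [← sq_abs]; nlinarith [abs_nonneg (x i)]
    linarith
  · intro i _
    nlinarith [sq_nonneg (x i)]

lemma Gp_eq_zero_iff {n : ℕ} (x : EuclideanSpace ℝ (Fin n)) (m : ℕ) :
    Gp n x m = 0 ↔ ∃ i : Fin n, m ≤ (i : ℕ) ∧ x i ^ 2 = 1 := by
  rw [Gp, Finset.prod_eq_zero_iff]
  constructor
  · rintro ⟨i, hi, h⟩
    exact ⟨i, by simpa using hi, by linarith⟩
  · rintro ⟨i, hi, h⟩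
    exact ⟨i, by simpa using hi, by linarith⟩

lemma Gp_zero_mono {n : ℕ} (x : EuclideanSpace ℝ (Fin n)) {m m' : ℕ} (h : m ≤ m')
    (h0 : Gp n x m' = 0) : Gp n x m = 0 := by
  rw [Gp_eq_zero_iff] at h0 ⊢
  obtain ⟨i, hi, hsq⟩ := h0
  exact ⟨i, le_trans h hi, hsq⟩

lemma Gp_zero_of_coord {n : ℕ} (x : EuclideanSpace ℝ (Fin n)) {m : ℕ} {i : Fin n}
    (h : m ≤ (i : ℕ)) (hsq : x i ^ 2 = 1) : Gp n x m = 0 :=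
  (Gp_eq_zero_iff x m).2 ⟨i, h, hsq⟩

/-- downward strong induction from n -/
lemma down_ind (n : ℕ) (P : ℕ → Prop) (htop : ∀ m, n ≤ m → P m)
    (hstep : ∀ m, m < n → (∀ m', m < m' → P m') → P m) : ∀ m, P m := by
  have key : ∀ d m, n ≤ m + d → P m := by
    intro d
    induction d with
    | zero => intro m h; exact htop m (by omega)
    | succ d ih =>
      intro m h
      by_cases hc : n ≤ m
      · exact htop m hc
      · exact hstep m (by omega) (fun m' hm' => ih m' (by omega))
  intro m; exact key n m (by omega)

lemma Gp_eq_prod_ite {n : ℕ} (x : EuclideanSpace ℝ (Fin n)) (m : ℕ) :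
    Gp n x m = ∏ i : Fin n, (if m ≤ (i : ℕ) then 1 - x i ^ 2 else 1) := by
  rw [Gp, Finset.prod_filter]

lemma Gp_succ_tail {n : ℕ} (x : EuclideanSpace ℝ (Fin (n + 1))) (m : ℕ) :
    Gp (n + 1) x (m + 1) = Gp n (WithLp.toLp 2 fun i : Fin n => x i.succ) m := by
  rw [Gp_eq_prod_ite, Gp_eq_prod_ite, Fin.prod_univ_succ]
  simp only [Fin.val_zero, Fin.val_succ]
  simp only [show ¬ (m + 1 ≤ 0) by omega, if_false]
  rw [one_mul]
  apply Finset.prod_congr rfl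
  intro i _
  congr 1
  simp only [eq_iff_iff]
  omega

lemma tail_mem_cube {n : ℕ} {x : EuclideanSpace ℝ (Fin (n + 1))} (hx : x ∈ cube (n + 1)) :
    (WithLp.toLp 2 fun i : Fin n => x i.succ) ∈ cube n := fun i => hx i.succ

lemma norm_sq_eucl {n : ℕ} (y : EuclideanSpace ℝ (Fin n)) : ‖y‖ ^ 2 = ∑ i, y i ^ 2 := by
  rw [EuclideanSpace.norm_eq, Real.sq_sqrt (Finset.sum_nonneg fun _ _ => sq_nonneg _)]
  simp [Real.norm_eq_abs, sq_abs]

lemma norm_phi_sq {n : ℕ} : ∀ {x : EuclideanSpace ℝ (Fin n)}, x ∈ cube n →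
    ‖phi n x‖ ^ 2 = 1 - Gp n x 0 := by
  induction n with
  | zero =>
    intro x _
    rw [norm_sq_eucl]
    simp [phi, Gp]
  | succ n ih =>
    intro x hx
    have hxt := tail_mem_cube hx
    have hG : 0 ≤ Gp n (WithLp.toLp 2 fun i : Fin n => x i.succ) 0 := Gp_nonneg hxt 0
    have hN : ‖phi n (WithLp.toLp 2 fun i : Fin n => x i.succ)‖ ^ 2 = 1 - Gp n (WithLp.toLp 2 fun i : Fin n => x i.succ) 0 := ih hxt
    have hphi : phi (n+1) x = WithLp.toLp 2 (Fin.cons (x 0 * Real.sqrt (1 - ‖phi n (WithLp.toLp 2 fun i : Fin n => x i.succ)‖ ^ 2))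
        (phi n (WithLp.toLp 2 fun i : Fin n => x i.succ)) : Fin (n+1) → ℝ) := rfl
    rw [norm_sq_eucl, hphi, Fin.sum_univ_succ]
    simp only [PiLp.toLp_apply, Fin.cons_zero, Fin.cons_succ]
    have : ∑ i : Fin n, (phi n (WithLp.toLp 2 fun i : Fin n => x i.succ) i) ^ 2 = ‖phi n (WithLp.toLp 2 fun i : Fin n => x i.succ)‖ ^ 2 :=
      (norm_sq_eucl _).symm
    rw [this, hN, mul_pow, Real.sq_sqrt (by linarith)]
    have h0 : Gp (n+1) x 0 = (1 - x 0 ^ 2) * Gp n (WithLp.toLp 2 fun i : Fin n => x i.succ) 0 := by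
      rw [Gp_factor x (Nat.succ_pos n), Gp_succ_tail]
      rfl
    rw [h0]; ring

lemma phi_apply {n : ℕ} : ∀ {x : EuclideanSpace ℝ (Fin n)}, x ∈ cube n → ∀ (j : Fin n),
    phi n x j = x j * Real.sqrt (Gp n x ((j : ℕ) + 1)) := by
  induction n with
  | zero => intro x _ j; exact absurd j.isLt (by omega)
  | succ n ih =>
    intro x hx j
    have hxt := tail_mem_cube hx
    have hN : ‖phi n (WithLp.toLp 2 fun i : Fin n => x i.succ)‖ ^ 2 = 1 - Gp n (WithLp.toLp 2 fun i : Fin n => x i.succ) 0 :=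
      norm_phi_sq hxt
    have hphi : phi (n+1) x = WithLp.toLp 2 (Fin.cons (x 0 * Real.sqrt (1 - ‖phi n (WithLp.toLp 2 fun i : Fin n => x i.succ)‖ ^ 2))
        (phi n (WithLp.toLp 2 fun i : Fin n => x i.succ)) : Fin (n+1) → ℝ) := rfl
    refine Fin.cases ?_ ?_ j
    · rw [hphi, PiLp.toLp_apply, Fin.cons_zero, hN]
      have h2 : Gp (n+1) x ((0:Fin (n+1)).val + 1) = Gp n (WithLp.toLp 2 fun i : Fin n => x i.succ) 0 := by
        rw [Fin.val_zero]; exact Gp_succ_tail x 0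
      rw [h2, show (1:ℝ) - (1 - Gp n (WithLp.toLp 2 fun i : Fin n => x i.succ) 0) = Gp n (WithLp.toLp 2 fun i : Fin n => x i.succ) 0 from by ring]
    · intro i
      rw [hphi, PiLp.toLp_apply, Fin.cons_succ, ih hxt i]
      have : Gp (n+1) x ((i.succ : ℕ) + 1) = Gp n (WithLp.toLp 2 fun i : Fin n => x i.succ) ((i : ℕ) + 1) := by
        rw [Fin.val_succ, Gp_succ_tail]
      rw [this]

lemma norm_phi_le_one {n : ℕ} {x : EuclideanSpace ℝ (Fin n)} (hx : x ∈ cube n) :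
    ‖phi n x‖ ≤ 1 := by
  have h := norm_phi_sq hx
  have hG := Gp_nonneg hx 0
  nlinarith [norm_nonneg (phi n x)]

lemma phi_mem_cube {n : ℕ} {x : EuclideanSpace ℝ (Fin n)} (hx : x ∈ cube n) :
    ∀ j, |phi n x j| ≤ 1 := by
  intro j
  rw [phi_apply hx j, abs_mul, abs_of_nonneg (Real.sqrt_nonneg _)]
  have h1 := hx j
  have h2 : Real.sqrt (Gp n x ((j : ℕ) + 1)) ≤ 1 := by
    rw [show (1:ℝ) = Real.sqrt 1 by simp]
    exact Real.sqrt_le_sqrt (Gp_le_one hx _)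
  have := abs_nonneg (x j)
  nlinarith [Real.sqrt_nonneg (Gp n x ((j : ℕ) + 1))]

lemma Gp_rec {n : ℕ} {x : EuclideanSpace ℝ (Fin n)} (hx : x ∈ cube n) {m : ℕ} (hm : m < n) :
    Gp n x m = Gp n x (m + 1) - (phi n x ⟨m, hm⟩) ^ 2 := by
  rw [phi_apply hx ⟨m, hm⟩, mul_pow, Real.sq_sqrt (Gp_nonneg hx _), Gp_factor x hm]
  ring

lemma Gp_eq_of_phi_eq {n : ℕ} {x x' : EuclideanSpace ℝ (Fin n)} (hx : x ∈ cube n)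
    (hx' : x' ∈ cube n) (h : phi n x = phi n x') : ∀ m, Gp n x m = Gp n x' m := by
  apply down_ind n
  · intro m hm; rw [Gp_top x hm, Gp_top x' hm]
  · intro m hm ih
    rw [Gp_rec hx hm, Gp_rec hx' hm, ih (m+1) (by omega), h]

lemma coord_eq_or_zero {n : ℕ} {x x' : EuclideanSpace ℝ (Fin n)} (hx : x ∈ cube n)
    (hx' : x' ∈ cube n) (h : phi n x = phi n x') (j : Fin n) :
    x j = x' j ∨ Gp n x ((j : ℕ) + 1) = 0 := by
  by_cases h0 : Gp n x ((j : ℕ) + 1) = 0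
  · exact Or.inr h0
  · left
    have hG := Gp_eq_of_phi_eq hx hx' h ((j : ℕ) + 1)
    have h1 : phi n x j = phi n x' j := by rw [h]
    rw [phi_apply hx j, phi_apply hx' j, ← hG] at h1
    have hpos : 0 < Real.sqrt (Gp n x ((j : ℕ) + 1)) :=
      Real.sqrt_pos.2 (lt_of_le_of_ne (Gp_nonneg hx _) (Ne.symm h0))
    exact mul_right_cancel₀ (ne_of_gt hpos) h1

/-- discontinuous section of phi -/
noncomputable def sig (n : ℕ) (z : EuclideanSpace ℝ (Fin n)) : EuclideanSpace ℝ (Fin n) :=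
  WithLp.toLp 2 fun j : Fin n =>
    if Tl n z ((j : ℕ) + 1) < 1 then z j / Real.sqrt (1 - Tl n z ((j : ℕ) + 1)) else 1

lemma sig_apply (n : ℕ) (z : EuclideanSpace ℝ (Fin n)) (j : Fin n) :
    sig n z j =
      if Tl n z ((j : ℕ) + 1) < 1 then z j / Real.sqrt (1 - Tl n z ((j : ℕ) + 1)) else 1 := rfl

lemma Tl_le_one {n : ℕ} {z : EuclideanSpace ℝ (Fin n)} (hz : ‖z‖ ≤ 1) (m : ℕ) :
    Tl n z m ≤ 1 := by
  have h0 : Tl n z 0 ≤ 1 := by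
    rw [Tl_zero_eq]
    nlinarith [norm_nonneg z]
  exact le_trans (Tl_anti z (Nat.zero_le m)) h0

lemma sig_mem_cube {n : ℕ} {z : EuclideanSpace ℝ (Fin n)} (hz : ‖z‖ ≤ 1) :
    sig n z ∈ cube n := by
  intro j
  rw [sig_apply]
  by_cases h : Tl n z ((j : ℕ) + 1) < 1
  · rw [if_pos h]
    have hTj : z j ^ 2 + Tl n z ((j : ℕ) + 1) ≤ 1 := by
      have := Tl_factor z j.isLt
      have h2 := Tl_le_one hz (j : ℕ)
      have h3 : (⟨(j:ℕ), j.isLt⟩ : Fin n) = j := Fin.ext rfl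
      rw [h3] at this
      linarith
    rw [abs_div, abs_of_nonneg (Real.sqrt_nonneg _), div_le_one
      (Real.sqrt_pos.2 (by linarith))]
    rw [show |z j| = Real.sqrt (z j ^ 2) from by rw [Real.sqrt_sq_eq_abs]]
    exact Real.sqrt_le_sqrt (by linarith)
  · rw [if_neg h]; simp

lemma Gp_sig {n : ℕ} {z : EuclideanSpace ℝ (Fin n)} (hz : ‖z‖ ≤ 1) :
    ∀ m, Gp n (sig n z) m = 1 - Tl n z m := by
  apply down_ind n
  · intro m hm; rw [Gp_top _ hm, Tl_top _ hm]; ring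
  · intro m hm ih
    have hT1 : Tl n z m ≤ 1 := Tl_le_one hz m
    have hTf : Tl n z m = z ⟨m, hm⟩ ^ 2 + Tl n z (m + 1) := Tl_factor z hm
    have hGf : Gp n (sig n z) m = (1 - sig n z ⟨m, hm⟩ ^ 2) * Gp n (sig n z) (m + 1) :=
      Gp_factor _ hm
    rw [hGf, ih (m+1) (by omega)]
    by_cases h : Tl n z (m + 1) < 1
    · have hs : sig n z ⟨m, hm⟩ = z ⟨m, hm⟩ / Real.sqrt (1 - Tl n z (m + 1)) := by
        rw [sig_apply]; simp only []
        rw [if_pos h]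
      rw [hs, div_pow, Real.sq_sqrt (by linarith)]
      have hne : (1 : ℝ) - Tl n z (m+1) ≠ 0 := by linarith
      field_simp
      rw [hTf]; ring
    · have hT2 : Tl n z (m + 1) = 1 := le_antisymm (Tl_le_one hz _) (by linarith)
      have hs : sig n z ⟨m, hm⟩ = 1 := by
        rw [sig_apply]; simp only []
        rw [if_neg h]
      have hzm : z ⟨m, hm⟩ ^ 2 = 0 := by nlinarith [sq_nonneg (z ⟨m, hm⟩)]
      rw [hs, hT2]
      nlinarith [hzm]

lemma phi_sig {n : ℕ} {z : EuclideanSpace ℝ (Fin n)} (hz : ‖z‖ ≤ 1) :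
    phi n (sig n z) = z := by
  ext j
  rw [phi_apply (sig_mem_cube hz) j, Gp_sig hz]
  by_cases h : Tl n z ((j : ℕ) + 1) < 1
  · have hs : sig n z j = z j / Real.sqrt (1 - Tl n z ((j : ℕ) + 1)) := by
      rw [sig_apply, if_pos h]
    rw [hs, div_mul_cancel₀]
    exact ne_of_gt (Real.sqrt_pos.2 (by linarith))
  · have hT2 : Tl n z ((j:ℕ) + 1) = 1 := le_antisymm (Tl_le_one hz _) (by linarith)
    have hTj : z j ^ 2 + Tl n z ((j : ℕ) + 1) ≤ 1 := by
      have := Tl_factor z j.isLt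
      have h3 : (⟨(j:ℕ), j.isLt⟩ : Fin n) = j := Fin.ext rfl
      rw [h3] at this
      have h2 := Tl_le_one hz (j : ℕ)
      linarith
    have hzj : z j = 0 := by nlinarith [sq_nonneg (z j)]
    have hs : sig n z j = 1 := by rw [sig_apply, if_neg h]
    rw [hs, hT2, hzj]
    simp

/-! flow machinery -/

noncomputable def hrf (r : ℝ) : ℝ := min 1 (max 0 (4 * r - 1)) * (1 - r)

noncomputable def pushF (a l : ℝ) : ℝ := a + l * (hrf (max a 0) - hrf (max (-a) 0))

noncomputable def epsn (n : ℕ) : ℝ := (3 / 4 : ℝ) ^ n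

noncomputable def gate (n : ℕ) (x : EuclideanSpace ℝ (Fin n)) (m : ℕ) : ℝ :=
  max 0 (1 - Gp n x m / epsn n)

noncomputable def lam (n m : ℕ) (s : ℝ) : ℝ := min 1 (max 0 (s - (n - 1 - m : ℕ)))

noncomputable def rho (n : ℕ) (x : EuclideanSpace ℝ (Fin n)) (s : ℝ) :
    EuclideanSpace ℝ (Fin n) :=
  WithLp.toLp 2 fun m : Fin n => pushF (x m) (min s 1) +
    lam n (m : ℕ) s * gate n x ((m : ℕ) + 1) * (1 - pushF (x m) (min s 1))

noncomputable def sched (n : ℕ) (u : ℝ) : ℝ := (n : ℝ) * min 1 (min (3 * u) (3 - 3 * u))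

noncomputable def tauf (u : ℝ) : ℝ := min 1 (max 0 (3 * u - 1))

lemma epsn_pos (n : ℕ) : 0 < epsn n := pow_pos (by norm_num) n

lemma epsn_le_one (n : ℕ) : epsn n ≤ 1 := pow_le_one₀ (by norm_num) (by norm_num)

lemma hrf_zero : hrf 0 = 0 := by rw [hrf]; norm_num

lemma hrf_one : hrf 1 = 0 := by rw [hrf]; norm_num

lemma hrf_of_half {r : ℝ} (h : 1 / 2 ≤ r) : hrf r = 1 - r := by
  rw [hrf, max_eq_right (by linarith), min_eq_left (by linarith), one_mul]

lemma hrf_nonneg {r : ℝ} (h : r ≤ 1) : 0 ≤ hrf r := by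
  rw [hrf]
  apply mul_nonneg
  · exact le_min (by norm_num) (le_max_left _ _)
  · linarith

lemma hrf_le {r : ℝ} (h1 : r ≤ 1) : hrf r ≤ 1 - r := by
  rw [hrf]
  have h2 : min 1 (max 0 (4 * r - 1)) ≤ 1 := min_le_left _ _
  have h3 : (0:ℝ) ≤ min 1 (max 0 (4 * r - 1)) := le_min (by norm_num) (le_max_left _ _)
  nlinarith

lemma pushF_zero (a : ℝ) : pushF a 0 = a := by rw [pushF]; ring

lemma pushF_one' (l : ℝ) : pushF 1 l = 1 := by
  rw [pushF]
  norm_num [hrf_one, hrf_zero]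

lemma pushF_negone (l : ℝ) : pushF (-1) l = -1 := by
  rw [pushF]
  norm_num [hrf_one, hrf_zero]

lemma pushF_sq_one {a : ℝ} (h : a ^ 2 = 1) (l : ℝ) : pushF a l = a := by
  have : (a - 1) * (a + 1) = 0 := by nlinarith
  rcases mul_eq_zero.1 this with h' | h'
  · have : a = 1 := by linarith
    rw [this, pushF_one']
  · have : a = -1 := by linarith
    rw [this, pushF_negone]

lemma pushF_full_pos {a : ℝ} (h1 : 1 / 2 ≤ a) (h2 : a ≤ 1) : pushF a 1 = 1 := by
  rw [pushF, max_eq_left (by linarith), max_eq_right (by linarith),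
    hrf_of_half h1, hrf_zero]
  ring

lemma pushF_full_neg {a : ℝ} (h1 : a ≤ -(1 / 2)) (h2 : -1 ≤ a) : pushF a 1 = -1 := by
  rw [pushF, max_eq_right (by linarith : a ≤ 0), max_eq_left (by linarith : (0:ℝ) ≤ -a),
    hrf_zero, hrf_of_half (by linarith : 1/2 ≤ -a)]
  ring

lemma pushF_full {a : ℝ} (h1 : 1 / 2 ≤ |a|) (h2 : |a| ≤ 1) : (pushF a 1) ^ 2 = 1 := by
  rcases abs_cases a with ⟨he, _⟩ | ⟨he, _⟩
  · rw [pushF_full_pos (by linarith) (by linarith)]; norm_num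
  · rw [pushF_full_neg (by linarith) (by linarith)]; norm_num

lemma pushF_mem {a l : ℝ} (ha : |a| ≤ 1) (hl0 : 0 ≤ l) (hl1 : l ≤ 1) : |pushF a l| ≤ 1 := by
  rcases le_or_gt 0 a with h | h
  · have hmax1 : max a 0 = a := max_eq_left h
    have hmax2 : max (-a) 0 = 0 := max_eq_right (by linarith)
    rw [pushF, hmax1, hmax2, hrf_zero]
    have ha1 : a ≤ 1 := (abs_le.1 ha).2
    have hh0 : 0 ≤ hrf a := hrf_nonneg ha1
    have hh1 : hrf a ≤ 1 - a := hrf_le ha1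
    rw [abs_le]
    constructor <;> nlinarith
  · have hmax1 : max a 0 = 0 := max_eq_right (by linarith)
    have hmax2 : max (-a) 0 = -a := max_eq_left (by linarith)
    rw [pushF, hmax1, hmax2, hrf_zero]
    have ha1 : -1 ≤ a := (abs_le.1 ha).1
    have hh0 : 0 ≤ hrf (-a) := hrf_nonneg (by linarith)
    have hh1 : hrf (-a) ≤ 1 - (-a) := hrf_le (by linarith)
    rw [abs_le]
    constructor <;> nlinarith

lemma lam_nonneg (n m : ℕ) (s : ℝ) : 0 ≤ lam n m s :=
  le_min (by norm_num) (le_max_left _ _)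

lemma lam_le_one (n m : ℕ) (s : ℝ) : lam n m s ≤ 1 := min_le_left _ _

lemma lam_eq_zero (n m : ℕ) {s : ℝ} (hs : s ≤ ((n - 1 - m : ℕ) : ℝ)) : lam n m s = 0 := by
  rw [lam, max_eq_left (by linarith), min_eq_right (by norm_num)]

lemma gate_nonneg (n : ℕ) (x : EuclideanSpace ℝ (Fin n)) (m : ℕ) : 0 ≤ gate n x m :=
  le_max_left _ _

lemma gate_le_one {n : ℕ} {x : EuclideanSpace ℝ (Fin n)} (hx : x ∈ cube n) (m : ℕ) :
    gate n x m ≤ 1 := by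
  rw [gate]
  have h1 : Gp n x m / epsn n ≥ 0 := div_nonneg (Gp_nonneg hx m) (le_of_lt (epsn_pos n))
  rw [max_le_iff]
  constructor <;> linarith

lemma gate_eq_one {n : ℕ} {x : EuclideanSpace ℝ (Fin n)} (h : Gp n x m = 0) :
    gate n x m = 1 := by
  rw [gate, h, zero_div, sub_zero, max_eq_right (by norm_num)]

lemma Gp_lt_of_gate_pos {n : ℕ} {x : EuclideanSpace ℝ (Fin n)} {m : ℕ}
    (h : 0 < gate n x m) : Gp n x m < epsn n := by
  rw [gate] at h
  have h2 : 0 < 1 - Gp n x m / epsn n := by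
    rcases max_cases (0:ℝ) (1 - Gp n x m / epsn n) with ⟨he, _⟩ | ⟨he, _⟩
    · rw [he] at h; exact absurd h (lt_irrefl _)
    · rw [he] at h; exact h
  have h3 := epsn_pos n
  have h4 : Gp n x m / epsn n < 1 := by linarith
  rw [div_lt_one h3] at h4
  linarith

lemma gate_top_eq_zero {n : ℕ} (hn : 1 ≤ n) (x : EuclideanSpace ℝ (Fin n)) :
    gate n x n = 0 := by
  rw [gate, Gp_top x le_rfl]
  have h1 : epsn n < 1 := by
    rw [epsn]
    exact pow_lt_one₀ (by norm_num) (by norm_num) (by omega)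
  have := epsn_pos n
  rw [max_eq_left]
  rw [sub_nonpos, le_div_iff₀ this]
  nlinarith

lemma rho_apply (n : ℕ) (x : EuclideanSpace ℝ (Fin n)) (s : ℝ) (m : Fin n) :
    rho n x s m = pushF (x m) (min s 1) +
      lam n (m : ℕ) s * gate n x ((m : ℕ) + 1) * (1 - pushF (x m) (min s 1)) := rfl

lemma rho_zero (n : ℕ) (x : EuclideanSpace ℝ (Fin n)) : rho n x 0 = x := by
  ext m
  rw [rho_apply, min_eq_left (by norm_num), pushF_zero, lam_eq_zero]
  · ring
  · positivity

lemma rho_mem_cube {n : ℕ} {x : EuclideanSpace ℝ (Fin n)} (hx : x ∈ cube n) {s : ℝ}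
    (hs : 0 ≤ s) : rho n x s ∈ cube n := by
  intro m
  rw [rho_apply]
  have hp : |pushF (x m) (min s 1)| ≤ 1 :=
    pushF_mem (hx m) (le_min hs (by norm_num)) (min_le_right _ _)
  have hl := lam_nonneg n (m : ℕ) s
  have hl1 := lam_le_one n (m : ℕ) s
  have hg := gate_nonneg n x ((m : ℕ) + 1)
  have hg1 := gate_le_one hx ((m : ℕ) + 1)
  set b := pushF (x m) (min s 1)
  set c := lam n (m : ℕ) s * gate n x ((m : ℕ) + 1)
  have hc0 : 0 ≤ c := mul_nonneg hl hg
  have hc1 : c ≤ 1 := mul_le_one₀ hl1 hg hg1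
  rw [abs_le] at hp ⊢
  constructor <;> nlinarith [hp.1, hp.2]

lemma rho_one_coord {n : ℕ} {x : EuclideanSpace ℝ (Fin n)} {m : Fin n} (h : x m = 1)
    (s : ℝ) : rho n x s m = 1 := by
  rw [rho_apply, h, pushF_one']
  ring

lemma rho_sq_one_pushonly {n : ℕ} {x : EuclideanSpace ℝ (Fin n)} {m : Fin n}
    (h : x m ^ 2 = 1) {s : ℝ} (hlam : lam n (m : ℕ) s * gate n x ((m : ℕ) + 1) = 0) :
    rho n x s m = x m := by
  rw [rho_apply, pushF_sq_one h, hlam]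
  ring

lemma lam_small {n : ℕ} {m : ℕ} (hm : m + 1 < n) {s : ℝ} (hs : s ≤ 1) : lam n m s = 0 := by
  apply lam_eq_zero
  have : 1 ≤ n - 1 - m := by omega
  have h2 : (1:ℝ) ≤ ((n - 1 - m : ℕ) : ℝ) := by exact_mod_cast this
  linarith

lemma lam_top {n : ℕ} {m : ℕ} (hm : m < n) : lam n m (n : ℝ) = 1 := by
  rw [lam]
  have h1 : ((n - 1 - m : ℕ) : ℝ) ≤ (n : ℝ) - 1 := by
    have : n - 1 - m ≤ n - 1 := by omega
    have h2 : ((n - 1 - m : ℕ) : ℝ) ≤ ((n - 1 : ℕ) : ℝ) := by exact_mod_cast this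
    have h3 : ((n - 1 : ℕ) : ℝ) = (n : ℝ) - 1 := by
      have : 1 ≤ n := by omega
      push_cast [this]
      ring
    linarith
  rw [max_eq_right (by linarith), min_eq_left (by linarith)]

/-- if all coords from ℓ on are < 1/2 in abs, Gp ℓ ≥ eps -/
lemma witness_half {n : ℕ} {x : EuclideanSpace ℝ (Fin n)} (hx : x ∈ cube n) {l : ℕ}
    (h : Gp n x l < epsn n) : ∃ i : Fin n, l ≤ (i : ℕ) ∧ 1 / 2 ≤ |x i| := by
  by_contra hc
  push_neg at hc
  have hb : ∀ i ∈ Finset.univ.filter (fun i : Fin n => l ≤ (i : ℕ)),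
      (3/4 : ℝ) ≤ 1 - x i ^ 2 := by
    intro i hi
    simp only [Finset.mem_filter, Finset.mem_univ, true_and] at hi
    have := hc i hi
    nlinarith [sq_abs (x i), abs_nonneg (x i)]
  have h1 : (3/4 : ℝ) ^ (Finset.univ.filter (fun i : Fin n => l ≤ (i : ℕ))).card ≤ Gp n x l := by
    rw [Gp, ← Finset.prod_const]
    exact Finset.prod_le_prod (fun _ _ => by norm_num) hb
  have h2 : epsn n ≤ (3/4 : ℝ) ^ (Finset.univ.filter (fun i : Fin n => l ≤ (i : ℕ))).card := by
    rw [epsn]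
    apply pow_le_pow_of_le_one (by norm_num) (by norm_num)
    exact le_trans (Finset.card_filter_le _ _) (by simp)
  linarith

lemma pin_ge1 {n : ℕ} (hn : 1 ≤ n) {x : EuclideanSpace ℝ (Fin n)} (hx : x ∈ cube n) :
    ∀ l, Gp n x l < epsn n → ∀ s : ℝ, 1 ≤ s → Gp n (rho n x s) l = 0 := by
  apply down_ind n
  · intro m hm hlt
    rw [Gp_top x hm] at hlt
    exact absurd hlt (not_lt.2 (epsn_le_one n))
  · intro m hm ih hlt s hs
    obtain ⟨i, hi, habs⟩ := witness_half hx hlt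
    have hmin : min s 1 = 1 := min_eq_right hs
    have hbsq : pushF (x i) 1 ^ 2 = 1 := pushF_full habs (hx i)
    by_cases hg : gate n x ((i : ℕ) + 1) = 0
    · apply Gp_zero_of_coord (rho n x s) hi
      rw [rho_apply, hmin, hg]
      rw [mul_zero, zero_mul, add_zero]
      exact hbsq
    · have hgpos : 0 < gate n x ((i : ℕ) + 1) :=
        lt_of_le_of_ne (gate_nonneg _ _ _) (Ne.symm hg)
      have hGi : Gp n x ((i : ℕ) + 1) < epsn n := Gp_lt_of_gate_pos hgpos
      have := ih ((i : ℕ) + 1) (by omega) hGi s hs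
      exact Gp_zero_mono _ (by omega) this

lemma pin0 {n : ℕ} (hn : 1 ≤ n) {x : EuclideanSpace ℝ (Fin n)} (hx : x ∈ cube n) {l : ℕ}
    (h : Gp n x l = 0) (s : ℝ) : Gp n (rho n x s) l = 0 := by
  rcases le_or_gt s 1 with hs | hs
  · obtain ⟨i, hi, hsq⟩ := (Gp_eq_zero_iff x l).1 h
    apply Gp_zero_of_coord (rho n x s) hi
    have : rho n x s i = x i := by
      by_cases hit : (i : ℕ) + 1 < n
      · exact rho_sq_one_pushonly hsq (by rw [lam_small hit hs]; ring)
      · have hieq : (i : ℕ) + 1 = n := by have := i.isLt; omega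
        exact rho_sq_one_pushonly hsq (by rw [hieq, gate_top_eq_zero hn]; ring)
    rw [this]; exact hsq
  · exact pin_ge1 hn hx l (by rw [h]; exact epsn_pos n) s (le_of_lt hs)

/-- existence of a coordinate of abs 1 at crossing time s = n -/
lemma wit_top {n : ℕ} (hn : 1 ≤ n) {x : EuclideanSpace ℝ (Fin n)} (hx : x ∈ cube n) :
    ∀ l, Gp n x l < epsn n → ∃ i : Fin n, l ≤ (i : ℕ) ∧ (rho n x (n : ℝ) i) ^ 2 = 1 := by
  apply down_ind n
  · intro m hm hlt
    rw [Gp_top x hm] at hlt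
    exact absurd hlt (not_lt.2 (epsn_le_one n))
  · intro m hm ih hlt
    obtain ⟨i, hi, habs⟩ := witness_half hx hlt
    have hmin : min (n : ℝ) 1 = 1 := min_eq_right (by exact_mod_cast hn)
    have hlamtop : lam n (i : ℕ) (n : ℝ) = 1 := lam_top i.isLt
    set b := pushF (x i) 1 with hb
    have hbsq : b ^ 2 = 1 := pushF_full habs (hx i)
    have hrhoi : rho n x (n : ℝ) i = b + gate n x ((i : ℕ) + 1) * (1 - b) := by
      rw [rho_apply, hmin, hlamtop, ← hb]
      ring
    have hb1 : b = 1 ∨ b = -1 := by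
      rcases mul_eq_zero.1 (show (b - 1) * (b + 1) = 0 by nlinarith) with h' | h'
      · left; linarith
      · right; linarith
    rcases hb1 with hb1 | hb1
    · refine ⟨i, hi, ?_⟩
      rw [hrhoi, hb1]
      norm_num
    · by_cases hg0 : gate n x ((i : ℕ) + 1) = 0
      · refine ⟨i, hi, ?_⟩
        rw [hrhoi, hb1, hg0]
        norm_num
      · by_cases hg1 : gate n x ((i : ℕ) + 1) = 1
        · refine ⟨i, hi, ?_⟩
          rw [hrhoi, hb1, hg1]
          norm_num
        · have hgpos : 0 < gate n x ((i : ℕ) + 1) :=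
            lt_of_le_of_ne (gate_nonneg _ _ _) (Ne.symm hg0)
          have hGi : Gp n x ((i : ℕ) + 1) < epsn n := Gp_lt_of_gate_pos hgpos
          obtain ⟨i', hi', hsq⟩ := ih ((i : ℕ) + 1) (by omega) hGi
          exact ⟨i', by omega, hsq⟩

/-! well-definedness on fibers -/

lemma traj_eq {n : ℕ} {x x' : EuclideanSpace ℝ (Fin n)} (hx : x ∈ cube n)
    (hx' : x' ∈ cube n) (hphi : phi n x = phi n x') {i : Fin n} (hco : x i = x' i)
    (s : ℝ) : rho n x s i = rho n x' s i := by
  have hG := Gp_eq_of_phi_eq hx hx' hphi ((i : ℕ) + 1)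
  rw [rho_apply, rho_apply, hco, gate, gate, hG]

lemma Gp_rho_eq {n : ℕ} (hn : 1 ≤ n) {x x' : EuclideanSpace ℝ (Fin n)} (hx : x ∈ cube n)
    (hx' : x' ∈ cube n) (hphi : phi n x = phi n x') (s : ℝ) (m : ℕ) :
    Gp n (rho n x s) m = Gp n (rho n x' s) m := by
  by_cases hall : ∀ i : Fin n, m ≤ (i : ℕ) → x i = x' i
  · rw [Gp, Gp]
    apply Finset.prod_congr rfl
    intro i hi
    simp only [Finset.mem_filter, Finset.mem_univ, true_and] at hi
    rw [traj_eq hx hx' hphi (hall i hi) s]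
  · push_neg at hall
    obtain ⟨i, hi, hne⟩ := hall
    have h0 : Gp n x ((i : ℕ) + 1) = 0 := by
      rcases coord_eq_or_zero hx hx' hphi i with h | h
      · exact absurd h hne
      · exact h
    have h0' : Gp n x' ((i : ℕ) + 1) = 0 := by
      rw [← Gp_eq_of_phi_eq hx hx' hphi]; exact h0
    have hz := pin0 hn hx h0 s
    have hz' := pin0 hn hx' h0' s
    rw [Gp_zero_mono _ (by omega) hz, Gp_zero_mono _ (by omega) hz']

lemma phi_rho_eq {n : ℕ} (hn : 1 ≤ n) {x x' : EuclideanSpace ℝ (Fin n)} (hx : x ∈ cube n)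
    (hx' : x' ∈ cube n) (hphi : phi n x = phi n x') {s : ℝ} (hs : 0 ≤ s) :
    phi n (rho n x s) = phi n (rho n x' s) := by
  ext j
  rw [phi_apply (rho_mem_cube hx hs) j, phi_apply (rho_mem_cube hx' hs) j,
    Gp_rho_eq hn hx hx' hphi s ((j : ℕ) + 1)]
  rcases coord_eq_or_zero hx hx' hphi j with h | h
  · rw [traj_eq hx hx' hphi h s]
  · have hz := pin0 hn hx h s
    rw [Gp_rho_eq hn hx hx' hphi s ((j : ℕ) + 1)] at hz
    rw [hz, Real.sqrt_zero, mul_zero, mul_zero]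

lemma rho_top_eq {n : ℕ} (hn : 1 ≤ n) {x x' : EuclideanSpace ℝ (Fin n)} (hx : x ∈ cube n)
    (hx' : x' ∈ cube n) (hphi : phi n x = phi n x') :
    rho n x (n : ℝ) = rho n x' (n : ℝ) := by
  ext i
  rcases coord_eq_or_zero hx hx' hphi i with h | h
  · exact traj_eq hx hx' hphi h _
  · have h' : Gp n x' ((i : ℕ) + 1) = 0 := by
      rw [← Gp_eq_of_phi_eq hx hx' hphi]; exact h
    have hg : gate n x ((i : ℕ) + 1) = 1 := gate_eq_one h
    have hg' : gate n x' ((i : ℕ) + 1) = 1 := gate_eq_one h'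
    have hlamtop : lam n (i : ℕ) (n : ℝ) = 1 := lam_top i.isLt
    rw [rho_apply, rho_apply, hg, hg', hlamtop]
    ring

/-! sigma skeleton facts -/

lemma Tl_one_of_zeros {n : ℕ} {z : EuclideanSpace ℝ (Fin n)} (hnorm : ‖z‖ = 1)
    {q : ℕ} (hq : q ≤ n) (hzeros : ∀ i : Fin n, (i : ℕ) < q → z i = 0) :
    ∀ j, j ≤ q → Tl n z j = 1 := by
  intro j
  induction j with
  | zero => intro _; rw [Tl_zero_eq, hnorm]; norm_num
  | succ j ih =>
    intro hj
    have hjn : j < n := by omega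
    have := Tl_factor z hjn
    rw [hzeros ⟨j, hjn⟩ (by simp only [Fin.val_mk]; omega)] at this
    rw [ih (by omega)] at this
    nlinarith

lemma sig_one_of_Tl {n : ℕ} {z : EuclideanSpace ℝ (Fin n)} {j : Fin n}
    (h : Tl n z ((j : ℕ) + 1) = 1) : sig n z j = 1 := by
  rw [sig_apply, if_neg (by rw [h]; exact lt_irrefl 1)]

lemma sig_q_sq_one {n : ℕ} {z : EuclideanSpace ℝ (Fin n)} (hz : ‖z‖ ≤ 1)
    (hnorm : ‖z‖ = 1) {q : ℕ} (hqn : q < n)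
    (hzeros : ∀ i : Fin n, (i : ℕ) < q → z i = 0) :
    (sig n z ⟨q, hqn⟩) ^ 2 = 1 := by
  have hTq : Tl n z q = 1 :=
    Tl_one_of_zeros hnorm (by omega) hzeros q le_rfl
  by_cases h : Tl n z (q + 1) < 1
  · have hzq : z ⟨q, hqn⟩ ^ 2 = 1 - Tl n z (q + 1) := by
      have := Tl_factor z hqn
      rw [hTq] at this
      linarith
    have hs : sig n z ⟨q, hqn⟩ = z ⟨q, hqn⟩ / Real.sqrt (1 - Tl n z (q + 1)) := by
      rw [sig_apply]
      simp only []
      rw [if_pos h]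
    rw [hs, div_pow, Real.sq_sqrt (by linarith), hzq]
    have : (1:ℝ) - Tl n z (q+1) ≠ 0 := by linarith
    field_simp
  · have : Tl n z (q + 1) = 1 := le_antisymm (Tl_le_one hz _) (by linarith)
    rw [sig_one_of_Tl this]
    norm_num

/-! schedule facts -/

lemma tauf_mem (u : ℝ) : tauf u ∈ Set.Icc (0:ℝ) 1 :=
  ⟨le_min (by norm_num) (le_max_left _ _), min_le_left _ _⟩

lemma tauf_zero {u : ℝ} (h : u ≤ 1/3) : tauf u = 0 := by
  rw [tauf, max_eq_left (by linarith), min_eq_right (by norm_num)]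

lemma tauf_one {u : ℝ} (h : 2/3 ≤ u) : tauf u = 1 := by
  rw [tauf, max_eq_right (by linarith), min_eq_left (by linarith)]

lemma sched_nonneg (n : ℕ) {u : ℝ} (h0 : 0 ≤ u) (h1 : u ≤ 1) : 0 ≤ sched n u := by
  rw [sched]
  apply mul_nonneg (by exact_mod_cast Nat.zero_le n : (0:ℝ) ≤ (n:ℝ))
  exact le_min (by norm_num) (le_min (by linarith) (by linarith))

lemma sched_le (n : ℕ) (u : ℝ) : sched n u ≤ (n : ℝ) := by
  rw [sched]
  have h1 : min 1 (min (3*u) (3 - 3*u)) ≤ 1 := min_le_left _ _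
  have h2 : (0:ℝ) ≤ (n:ℝ) := by exact_mod_cast Nat.zero_le n
  nlinarith

lemma sched_zero (n : ℕ) : sched n 0 = 0 := by
  rw [sched]; norm_num

lemma sched_one (n : ℕ) : sched n 1 = 0 := by
  rw [sched]; norm_num

lemma sched_mid (n : ℕ) {u : ℝ} (h1 : 1/3 ≤ u) (h2 : u ≤ 2/3) : sched n u = n := by
  rw [sched, min_eq_left (le_min (by linarith) (by linarith))]
  ring

/-! counting -/

lemma card_filter_lt (n q : ℕ) (hq : q ≤ n) :
    (Finset.univ.filter (fun j : Fin n => (j : ℕ) < q)).card = q := by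
  apply Finset.card_eq_of_bijective (fun i h => ⟨i, by omega⟩)
  · intro a ha
    simp only [Finset.mem_filter, Finset.mem_univ, true_and] at ha
    exact ⟨(a : ℕ), ha, Fin.ext rfl⟩
  · intro i h
    simp only [Finset.mem_filter, Finset.mem_univ, true_and]
    exact h
  · intro i j hi hj hij
    exact Fin.mk.inj_iff.1 hij

/-! continuity -/

lemma continuous_eucl {n : ℕ} {γ : Type*} [TopologicalSpace γ]
    {f : γ → EuclideanSpace ℝ (Fin n)} (h : ∀ i, Continuous fun a => f a i) :
    Continuous f := by
  have : f = (EuclideanSpace.equiv (Fin n) ℝ).symm ∘ (fun a i => f a i) := rfl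
  rw [this]
  exact (EuclideanSpace.equiv (Fin n) ℝ).symm.continuous.comp (continuous_pi h)

lemma continuous_coord {n : ℕ} (i : Fin n) :
    Continuous fun x : EuclideanSpace ℝ (Fin n) => x i :=
  (EuclideanSpace.proj i).continuous

lemma continuous_Gp (n : ℕ) (m : ℕ) : Continuous fun x : EuclideanSpace ℝ (Fin n) => Gp n x m := by
  unfold Gp
  apply continuous_finset_prod
  intro i _
  exact continuous_const.sub ((continuous_coord i).pow 2)

lemma continuous_hrf : Continuous hrf := by
  unfold hrf
  exact (continuous_const.min (continuous_const.max
    ((continuous_const.mul continuous_id).sub continuous_const))).mul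
    (continuous_const.sub continuous_id)

lemma continuous_pushF : Continuous fun p : ℝ × ℝ => pushF p.1 p.2 := by
  unfold pushF
  apply continuous_fst.add
  apply continuous_snd.mul
  apply Continuous.sub
  · exact continuous_hrf.comp (continuous_fst.max continuous_const)
  · exact continuous_hrf.comp (continuous_fst.neg.max continuous_const)

lemma continuous_lam (n m : ℕ) : Continuous (lam n m) := by
  unfold lam
  exact continuous_const.min (continuous_const.max (continuous_id.sub continuous_const))

lemma continuous_gate (n m : ℕ) : Continuous fun x : EuclideanSpace ℝ (Fin n) => gate n x m := by
  unfold gate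
  exact continuous_const.max (continuous_const.sub ((continuous_Gp n m).div_const _))

lemma continuous_sched (n : ℕ) : Continuous (sched n) := by
  unfold sched
  apply continuous_const.mul
  exact continuous_const.min ((continuous_const.mul continuous_id).min
    (continuous_const.sub (continuous_const.mul continuous_id)))

lemma continuous_tauf : Continuous tauf := by
  unfold tauf
  exact continuous_const.min (continuous_const.max
    ((continuous_const.mul continuous_id).sub continuous_const))

lemma continuous_rho_pair (n : ℕ) :
    Continuous fun p : EuclideanSpace ℝ (Fin n) × ℝ => rho n p.1 (sched n p.2) := by
  apply continuous_eucl
  intro i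
  have hb : Continuous fun p : EuclideanSpace ℝ (Fin n) × ℝ =>
      pushF (p.1 i) (min (sched n p.2) 1) := by
    have hpair : Continuous fun p : EuclideanSpace ℝ (Fin n) × ℝ =>
        ((p.1 i, min (sched n p.2) 1) : ℝ × ℝ) :=
      ((continuous_coord i).comp continuous_fst).prodMk
        (((continuous_sched n).comp continuous_snd).min continuous_const)
    exact continuous_pushF.comp hpair
  have hl : Continuous fun p : EuclideanSpace ℝ (Fin n) × ℝ =>
      lam n (i : ℕ) (sched n p.2) := (continuous_lam n (i : ℕ)).comp ((continuous_sched n).comp continuous_snd)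
  have hg : Continuous fun p : EuclideanSpace ℝ (Fin n) × ℝ =>
      gate n p.1 ((i : ℕ) + 1) := (continuous_gate n ((i : ℕ) + 1)).comp continuous_fst
  show Continuous fun p : EuclideanSpace ℝ (Fin n) × ℝ =>
      pushF (p.1 i) (min (sched n p.2) 1) +
      lam n (i : ℕ) (sched n p.2) * gate n p.1 ((i : ℕ) + 1) *
        (1 - pushF (p.1 i) (min (sched n p.2) 1))
  exact hb.add (((hl.mul hg)).mul (continuous_const.sub hb))

lemma gate_eq_zero_of_ge {n : ℕ} {x : EuclideanSpace ℝ (Fin n)} {m : ℕ}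
    (h : epsn n ≤ Gp n x m) : gate n x m = 0 := by
  rw [gate, max_eq_left]
  have he := epsn_pos n
  rw [sub_nonpos, le_div_iff₀ he]
  nlinarith

lemma abs_eq_one_of_sq {a : ℝ} (h : a ^ 2 = 1) : |a| = 1 := by
  rcases mul_eq_zero.1 (show (a - 1) * (a + 1) = 0 by nlinarith) with h' | h'
  · rw [show a = 1 by linarith]; norm_num
  · rw [show a = -1 by linarith]; norm_num

lemma cube_compact (n : ℕ) : IsCompact (cube n) := by
  rw [Metric.isCompact_iff_isClosed_bounded]
  constructor
  · have hset : cube n = ⋂ i : Fin n, (fun x : EuclideanSpace ℝ (Fin n) => x i) ⁻¹'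
        (Set.Icc (-1 : ℝ) 1) := by
      ext x
      simp only [cube, Set.mem_setOf_eq, Set.mem_iInter, Set.mem_preimage, Set.mem_Icc, abs_le]
    rw [hset]
    exact isClosed_iInter fun i => IsClosed.preimage (continuous_coord i) isClosed_Icc
  · apply Bornology.IsBounded.subset (Metric.isBounded_closedBall
      (x := (0 : EuclideanSpace ℝ (Fin n))) (r := (n : ℝ) + 1))
    intro x hx
    rw [Metric.mem_closedBall, dist_zero_right]
    have h1 : ‖x‖ ^ 2 = Tl n x 0 := (Tl_zero_eq x).symm
    have h2 : Tl n x 0 ≤ (n : ℝ) := by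
      rw [Tl]
      have : ∀ i ∈ Finset.univ.filter (fun i : Fin n => 0 ≤ (i : ℕ)), x i ^ 2 ≤ 1 := by
        intro i _
        have := hx i
        nlinarith [sq_abs (x i), abs_nonneg (x i)]
      calc ∑ i ∈ Finset.univ.filter (fun i : Fin n => 0 ≤ (i : ℕ)), x i ^ 2
          ≤ ∑ _i ∈ Finset.univ.filter (fun i : Fin n => 0 ≤ (i : ℕ)), (1:ℝ) :=
            Finset.sum_le_sum this
        _ ≤ (n : ℝ) := by
            rw [Finset.sum_const, nsmul_eq_mul, mul_one]
            exact_mod_cast Finset.card_filter_le _ _ |>.trans (by simp)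
    nlinarith [norm_nonneg x]

lemma Tl_pole {n : ℕ} (hn : 1 ≤ n) (a : ℝ) {m : ℕ} (hm : m ≤ n - 1) :
    Tl n (pole n a) m = a ^ 2 := by
  rw [Tl]
  rw [Finset.sum_eq_single_of_mem (⟨n - 1, by omega⟩ : Fin n)]
  · rw [pole]
    simp only [PiLp.toLp_apply, Fin.val_mk, if_pos rfl]
    norm_num
  · simp only [Finset.mem_filter, Finset.mem_univ, true_and, Fin.val_mk]
    omega
  · intro b hb hne
    rw [pole]
    simp only [PiLp.toLp_apply]
    rw [if_neg, zero_pow]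
    · omega
    · intro hb2
      apply hne
      exact Fin.ext (by simpa using hb2)

lemma sig_pole {n : ℕ} (hn : 1 ≤ n) {a : ℝ} (ha : a ^ 2 = 1) :
    ∀ j : Fin n, sig n (pole n a) j = if (j : ℕ) = n - 1 then a else 1 := by
  intro j
  by_cases hj : (j : ℕ) = n - 1
  · rw [if_pos hj]
    have hT : Tl n (pole n a) ((j : ℕ) + 1) = 0 := Tl_top _ (by omega)
    rw [sig_apply, if_pos (by rw [hT]; norm_num), hT]
    rw [pole]
    simp only [PiLp.toLp_apply, if_pos hj]
    norm_num
  · rw [if_neg hj]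
    have hjlt : (j : ℕ) + 1 ≤ n - 1 := by have := j.isLt; omega
    apply sig_one_of_Tl
    rw [Tl_pole hn a hjlt, ha]

/-- injectivity of the comparison from globular to cubical homotopy
classes. Given a filtration `F` on `X`, globe-filtered continuous maps `α β : Dⁿ → X`,
and a homotopy `H : Iⁿ × [0,1] → X` from `α ∘ φₙ` to `β ∘ φₙ` through cube-filtered maps,
rel the vertices of `Iⁿ`, there is a homotopy `L : Dⁿ × [0,1] → X` from `α` to `β`
through globe-filtered maps, rel the two vertices `(0,…,0,±1)` of the globe. -/
theorem globular_homotopy_of_cubical_homotopy {X : Type*} [TopologicalSpace X]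
    (F : ℕ → Set X) (hF : Monotone F) (n : ℕ) (hn : 1 ≤ n)
    (α β : EuclideanSpace ℝ (Fin n) → X)
    (hαc : ContinuousOn α (disk n)) (hβc : ContinuousOn β (disk n))
    (hαskel : ∀ k < n, ∀ z ∈ globeSkel n k, α z ∈ F k)
    (hαtop : ∀ m, n ≤ m → ∀ z ∈ disk n, α z ∈ F m)
    (hβskel : ∀ k < n, ∀ z ∈ globeSkel n k, β z ∈ F k)
    (hβtop : ∀ m, n ≤ m → ∀ z ∈ disk n, β z ∈ F m)
    (H : EuclideanSpace ℝ (Fin n) × ℝ → X)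
    (hHc : ContinuousOn H (cube n ×ˢ Set.Icc (0 : ℝ) 1))
    (hH0 : ∀ x ∈ cube n, H (x, 0) = α (phi n x))
    (hH1 : ∀ x ∈ cube n, H (x, 1) = β (phi n x))
    (hHskel : ∀ t ∈ Set.Icc (0 : ℝ) 1, ∀ k < n, ∀ x ∈ cubeSkel n k, H (x, t) ∈ F k)
    (hHtop : ∀ t ∈ Set.Icc (0 : ℝ) 1, ∀ m, n ≤ m → ∀ x ∈ cube n, H (x, t) ∈ F m)
    (hHvert : ∀ v : EuclideanSpace ℝ (Fin n), (∀ i : Fin n, |v i| = 1) →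
        ∀ t ∈ Set.Icc (0 : ℝ) 1, H (v, t) = H (v, 0)) :
    ∃ L : EuclideanSpace ℝ (Fin n) × ℝ → X,
      ContinuousOn L (disk n ×ˢ Set.Icc (0 : ℝ) 1) ∧
      (∀ z ∈ disk n, L (z, 0) = α z ∧ L (z, 1) = β z) ∧
      (∀ t ∈ Set.Icc (0 : ℝ) 1, ∀ k < n, ∀ z ∈ globeSkel n k, L (z, t) ∈ F k) ∧
      (∀ t ∈ Set.Icc (0 : ℝ) 1, ∀ m, n ≤ m → ∀ z ∈ disk n, L (z, t) ∈ F m) ∧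
      (∀ a : ℝ, a = 1 ∨ a = -1 →
        ∀ t ∈ Set.Icc (0 : ℝ) 1, L (pole n a, t) = L (pole n a, 0)) := by
  classical
  set L : EuclideanSpace ℝ (Fin n) × ℝ → X :=
    fun p => H (rho n (sig n p.1) (sched n p.2), tauf p.2) with hLdef
  -- well-definedness on fibers
  have hWD : ∀ x x' : EuclideanSpace ℝ (Fin n), x ∈ cube n → x' ∈ cube n →
      phi n x = phi n x' → ∀ u : ℝ, u ∈ Set.Icc (0:ℝ) 1 →
      H (rho n x (sched n u), tauf u) = H (rho n x' (sched n u), tauf u) := by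
    intro x x' hx hx' hphi u hu
    have hs0 : 0 ≤ sched n u := sched_nonneg n hu.1 hu.2
    rcases le_or_gt u (1/3) with h | h
    · rw [tauf_zero h, hH0 _ (rho_mem_cube hx hs0), hH0 _ (rho_mem_cube hx' hs0),
        phi_rho_eq hn hx hx' hphi hs0]
    · rcases le_or_gt (2/3) u with h2 | h2
      · rw [tauf_one h2, hH1 _ (rho_mem_cube hx hs0), hH1 _ (rho_mem_cube hx' hs0),
          phi_rho_eq hn hx hx' hphi hs0]
      · rw [sched_mid n (le_of_lt h) (le_of_lt h2), rho_top_eq hn hx hx' hphi]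
  refine ⟨L, ?_, ?_, ?_, ?_, ?_⟩
  · -- continuity
    have hKcomp : IsCompact (cube n ×ˢ Set.Icc (0:ℝ) 1) := (cube_compact n).prod isCompact_Icc
    haveI : CompactSpace (cube n ×ˢ Set.Icc (0:ℝ) 1 :
        Set (EuclideanSpace ℝ (Fin n) × ℝ)) := isCompact_iff_compactSpace.mp hKcomp
    set q : (cube n ×ˢ Set.Icc (0:ℝ) 1 : Set (EuclideanSpace ℝ (Fin n) × ℝ)) →
        (disk n ×ˢ Set.Icc (0:ℝ) 1 : Set (EuclideanSpace ℝ (Fin n) × ℝ)) :=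
      fun p => ⟨(phi n p.1.1, p.1.2), ⟨norm_phi_le_one p.2.1, p.2.2⟩⟩ with hqdef
    have hphicont : Continuous fun p : (cube n ×ˢ Set.Icc (0:ℝ) 1 :
        Set (EuclideanSpace ℝ (Fin n) × ℝ)) => phi n p.1.1 := by
      have heq : (fun p : (cube n ×ˢ Set.Icc (0:ℝ) 1 :
          Set (EuclideanSpace ℝ (Fin n) × ℝ)) => phi n p.1.1) =
          fun p => (WithLp.toLp 2 fun j : Fin n => p.1.1 j * Real.sqrt (Gp n p.1.1 ((j : ℕ) + 1)) :
            EuclideanSpace ℝ (Fin n)) := by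
        funext p
        ext j
        exact phi_apply p.2.1 j
      rw [heq]
      apply continuous_eucl
      intro j
      have hc1 : Continuous fun p : (cube n ×ˢ Set.Icc (0:ℝ) 1 :
          Set (EuclideanSpace ℝ (Fin n) × ℝ)) => p.1.1 :=
        continuous_fst.comp continuous_subtype_val
      exact ((continuous_coord j).comp hc1).mul
        (Real.continuous_sqrt.comp ((continuous_Gp n ((j : ℕ) + 1)).comp hc1))
    have hqcont : Continuous q := by
      apply Continuous.subtype_mk
      exact hphicont.prodMk (continuous_snd.comp continuous_subtype_val)
    have hqsurj : Function.Surjective q := by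
      rintro ⟨⟨z, t⟩, hm⟩
      have hz : ‖z‖ ≤ 1 := hm.1
      refine ⟨⟨(sig n z, t), ⟨sig_mem_cube hz, hm.2⟩⟩, ?_⟩
      apply Subtype.ext
      show (phi n (sig n z), t) = (z, t)
      rw [phi_sig hz]
    have hq : Topology.IsQuotientMap q :=
      IsClosedMap.isQuotientMap (hqcont.isClosedMap) hqcont hqsurj
    rw [continuousOn_iff_continuous_restrict, hq.continuous_iff]
    have heq2 : (Set.restrict (disk n ×ˢ Set.Icc (0:ℝ) 1) L) ∘ q =
        fun p : (cube n ×ˢ Set.Icc (0:ℝ) 1 : Set (EuclideanSpace ℝ (Fin n) × ℝ)) =>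
          H (rho n p.1.1 (sched n p.1.2), tauf p.1.2) := by
      funext p
      show L (phi n p.1.1, p.1.2) = _
      rw [hLdef]
      exact hWD (sig n (phi n p.1.1)) p.1.1 (sig_mem_cube (norm_phi_le_one p.2.1)) p.2.1
        (phi_sig (norm_phi_le_one p.2.1)) p.1.2 p.2.2
    change Continuous (Set.restrict (disk n ×ˢ Set.Icc (0:ℝ) 1) L ∘ q)
    rw [heq2]
    have hg : Continuous fun p : (cube n ×ˢ Set.Icc (0:ℝ) 1 :
        Set (EuclideanSpace ℝ (Fin n) × ℝ)) =>
        ((rho n p.1.1 (sched n p.1.2), tauf p.1.2) :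
          EuclideanSpace ℝ (Fin n) × ℝ) :=
      ((continuous_rho_pair n).comp continuous_subtype_val).prodMk
        (continuous_tauf.comp (continuous_snd.comp continuous_subtype_val))
    apply hHc.comp_continuous hg
    intro p
    constructor
    · exact rho_mem_cube p.2.1 (sched_nonneg n p.2.2.1 p.2.2.2)
    · exact tauf_mem _
  · -- endpoints
    intro z hz
    have hzle : ‖z‖ ≤ 1 := hz
    constructor
    · show H (rho n (sig n z) (sched n 0), tauf 0) = α z
      rw [sched_zero, rho_zero, tauf_zero (by norm_num), hH0 _ (sig_mem_cube hzle),
        phi_sig hzle]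
    · show H (rho n (sig n z) (sched n 1), tauf 1) = β z
      rw [sched_one, rho_zero, tauf_one (by norm_num), hH1 _ (sig_mem_cube hzle),
        phi_sig hzle]
  · -- skeleton
    intro t ht k hk z hzskel
    obtain ⟨hnorm, hzeros⟩ := hzskel
    have hzle : ‖z‖ ≤ 1 := le_of_eq hnorm
    set x := sig n z with hxdef
    have hx : x ∈ cube n := sig_mem_cube hzle
    set Q : ℕ := n - k - 1 with hQdef
    have hQn : Q < n := by omega
    have hTl1 : ∀ j, j ≤ Q → Tl n z j = 1 :=
      Tl_one_of_zeros hnorm (by omega) (fun i hi => hzeros i (by omega))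
    have hGpx : ∀ j, j ≤ Q → Gp n x j = 0 := by
      intro j hj
      rw [hxdef, Gp_sig hzle, hTl1 j hj]
      ring
    have hs0 : 0 ≤ sched n t := sched_nonneg n ht.1 ht.2
    have hrc : rho n x (sched n t) ∈ cube n := rho_mem_cube hx hs0
    have hglobe : ∀ s : ℝ, 0 ≤ s → phi n (rho n x s) ∈ globeSkel n k := by
      intro s hs
      have hrc' : rho n x s ∈ cube n := rho_mem_cube hx hs
      constructor
      · have h0 : Gp n (rho n x s) 0 = 0 := pin0 hn hx (hGpx 0 (by omega)) s
        have hsq := norm_phi_sq hrc'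
        rw [h0] at hsq
        have h2 : (‖phi n (rho n x s)‖ - 1) * (‖phi n (rho n x s)‖ + 1) = 0 := by
          nlinarith
        rcases mul_eq_zero.1 h2 with h' | h'
        · linarith
        · nlinarith [norm_nonneg (phi n (rho n x s))]
      · intro j hj
        have hzero : Gp n (rho n x s) ((j : ℕ) + 1) = 0 :=
          pin0 hn hx (hGpx ((j : ℕ) + 1) (by omega)) s
        rw [phi_apply hrc' j, hzero, Real.sqrt_zero, mul_zero]
    rcases le_or_gt t (1/3) with h | h
    · show H (rho n x (sched n t), tauf t) ∈ F k
      rw [tauf_zero h, hH0 _ hrc]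
      exact hαskel k hk _ (hglobe _ hs0)
    · rcases le_or_gt (2/3) t with h2 | h2
      · show H (rho n x (sched n t), tauf t) ∈ F k
        rw [tauf_one h2, hH1 _ hrc]
        exact hβskel k hk _ (hglobe _ hs0)
      · show H (rho n x (sched n t), tauf t) ∈ F k
        rw [sched_mid n (le_of_lt h) (le_of_lt h2)]
        apply hHskel (tauf t) (tauf_mem t) k hk
        constructor
        · exact rho_mem_cube hx (by exact_mod_cast Nat.zero_le n)
        · -- counting
          have hone : ∀ j : Fin n, (j : ℕ) < Q → rho n x (n : ℝ) j = 1 := by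
            intro j hj
            apply rho_one_coord
            rw [hxdef]
            apply sig_one_of_Tl
            exact hTl1 ((j : ℕ) + 1) (by omega)
          have hxQsq : x ⟨Q, hQn⟩ ^ 2 = 1 := by
            rw [hxdef]
            exact sig_q_sq_one hzle hnorm hQn (fun i hi => hzeros i (by omega))
          have hwit : ∃ i : Fin n, Q ≤ (i : ℕ) ∧ (rho n x (n : ℝ) i) ^ 2 = 1 := by
            by_cases hgp : Gp n x (Q + 1) < epsn n
            · obtain ⟨i, hi, hsq⟩ := wit_top hn hx (Q + 1) hgp
              exact ⟨i, by omega, hsq⟩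
            · refine ⟨⟨Q, hQn⟩, le_rfl, ?_⟩
              have hg0 : gate n x (Q + 1) = 0 := gate_eq_zero_of_ge (not_lt.1 hgp)
              have : rho n x (n : ℝ) ⟨Q, hQn⟩ = x ⟨Q, hQn⟩ := by
                apply rho_sq_one_pushonly hxQsq
                simp only [Fin.val_mk]
                rw [hg0]
                ring
              rw [this]
              exact hxQsq
          obtain ⟨i, hiQ, hisq⟩ := hwit
          have hsubset : insert i (Finset.univ.filter (fun j : Fin n => (j : ℕ) < Q)) ⊆
              Finset.univ.filter (fun j : Fin n => |rho n x (n : ℝ) j| = 1) := by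
            intro j hj
            simp only [Finset.mem_insert, Finset.mem_filter, Finset.mem_univ, true_and] at hj ⊢
            rcases hj with rfl | hj
            · exact abs_eq_one_of_sq hisq
            · rw [hone j hj]
              norm_num
          have hcard : (insert i (Finset.univ.filter
              (fun j : Fin n => (j : ℕ) < Q))).card = Q + 1 := by
            rw [Finset.card_insert_of_notMem, card_filter_lt n Q (by omega)]
            simp only [Finset.mem_filter, Finset.mem_univ, true_and]
            omega
          have hle : Q + 1 ≤ (Finset.univ.filter
              (fun j : Fin n => |rho n x (n : ℝ) j| = 1)).card := by
            rw [← hcard]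
            exact Finset.card_le_card hsubset
          have : n - k = Q + 1 := by omega
          rw [this]
          exact hle
  · -- top filtration
    intro t ht m hm z hz
    show H (rho n (sig n z) (sched n t), tauf t) ∈ F m
    apply hHtop (tauf t) (tauf_mem t) m hm
    exact rho_mem_cube (sig_mem_cube hz) (sched_nonneg n ht.1 ht.2)
  · -- poles
    intro a ha t ht
    have hasq : a ^ 2 = 1 := by rcases ha with rfl | rfl <;> norm_num
    set v := sig n (pole n a) with hvdef
    have hv : ∀ j : Fin n, v j = if (j : ℕ) = n - 1 then a else 1 := sig_pole hn hasq
    have hvabs : ∀ i : Fin n, |v i| = 1 := by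
      intro i
      rw [hv i]
      by_cases hi : (i : ℕ) = n - 1
      · rw [if_pos hi]; exact abs_eq_one_of_sq hasq
      · rw [if_neg hi]; norm_num
    have hvfix : ∀ s : ℝ, rho n v s = v := by
      intro s
      ext m
      by_cases hm : (m : ℕ) = n - 1
      · have hsq : v m ^ 2 = 1 := by
          have := hvabs m
          nlinarith [sq_abs (v m)]
        apply rho_sq_one_pushonly hsq
        rw [show (m : ℕ) + 1 = n by have := m.isLt; omega, gate_top_eq_zero hn]
        ring
      · have h1 : v m = 1 := by rw [hv m, if_neg hm]
        rw [rho_one_coord h1, h1]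
    show H (rho n v (sched n t), tauf t) = H (rho n v (sched n 0), tauf 0)
    rw [hvfix, hvfix]
    rw [tauf_zero (by norm_num : (0:ℝ) ≤ 1/3)]
    exact hHvert v hvabs (tauf t) (tauf_mem t)
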